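/- arXiv:2402.13377 — 3 statements merged into one kernel-verified Lean document; each statement's English description precedes it below -/
import Mathlib

section
/- Let ω ≠ 0 be a real number, and for t ∈ ℝ let M_ω(t) : ℝ² → ℝ² be the linear map M_ω(t)v = ((1/ω)(−sin(ωt) v₁ + (1 − cos(ωt)) v₂), (1/ω)((cos(ωt) − 1) v₁ − sin(ωt) v₂)). Let F : ℝ → ℝ² be continuous and let X, V : ℝ → ℝ² be C¹ functions satisfying X'(t) = V(t) and V'(t) = F(t) + (ω V₂(t), −ω V₁(t)) for all t. Then for all t ∈ ℝ, the function t ↦ X(t) + M_ω(t) V(t) is differentiable with derivative d/dt [X(t) + M_ω(t) V(t)] = M_ω(t) F(t). -/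
open Real

/-- The linear map `M_ω(t) = D_ω(t)/ω` of the backward free magnetized flow in
dimension 2. -/
noncomputable def Mom2 (ω t : ℝ) (v : Fin 2 → ℝ) : Fin 2 → ℝ :=
  ![(1 / ω) * (-Real.sin (ω * t) * v 0 + (1 - Real.cos (ω * t)) * v 1),
    (1 / ω) * ((Real.cos (ω * t) - 1) * v 0 - Real.sin (ω * t) * v 1)]

/-- For planar characteristics `X' = V`, `V' = F + (ω V₂, -ω V₁)`, the composition with
the backward free magnetized flow `t ↦ X(t) + M_ω(t) V(t)` is differentiable with
derivative `M_ω(t) F(t)`. -/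
theorem backward_flow_derivative_2d
    (ω : ℝ) (hω : ω ≠ 0) (F X V : ℝ → Fin 2 → ℝ) (hF : Continuous F)
    (hX : ∀ t, HasDerivAt X (V t) t)
    (hV : ∀ t, HasDerivAt V (F t + ![ω * V t 1, -(ω * V t 0)]) t) :
    ∀ t, HasDerivAt (fun s => X s + Mom2 ω s (V s)) (Mom2 ω t (F t)) t := by
  intro t
  have hX0 : HasDerivAt (fun s => X s 0) (V t 0) t := (hasDerivAt_pi.mp (hX t)) 0
  have hX1 : HasDerivAt (fun s => X s 1) (V t 1) t := (hasDerivAt_pi.mp (hX t)) 1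
  have hV0 : HasDerivAt (fun s => V s 0) (F t 0 + ω * V t 1) t := by
    have := (hasDerivAt_pi.mp (hV t)) 0
    simpa using this
  have hV1 : HasDerivAt (fun s => V s 1) (F t 1 - ω * V t 0) t := by
    have := (hasDerivAt_pi.mp (hV t)) 1
    simpa [sub_eq_add_neg] using this
  have hlin : HasDerivAt (fun s : ℝ => ω * s) ω t := by
    simpa using (hasDerivAt_id t).const_mul ω
  have hsin : HasDerivAt (fun s => Real.sin (ω * s)) (Real.cos (ω * t) * ω) t :=
    (Real.hasDerivAt_sin (ω * t)).comp t hlin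
  have hcos : HasDerivAt (fun s => Real.cos (ω * s)) (-Real.sin (ω * t) * ω) t :=
    (Real.hasDerivAt_cos (ω * t)).comp t hlin
  rw [hasDerivAt_pi]
  intro i
  fin_cases i
  · have h : HasDerivAt
        (fun s => X s 0 + (1 / ω) * (-Real.sin (ω * s) * V s 0 + (1 - Real.cos (ω * s)) * V s 1))
        ((1 / ω) * (-Real.sin (ω * t) * F t 0 + (1 - Real.cos (ω * t)) * F t 1)) t := by
      have h1 : HasDerivAt (fun s => -Real.sin (ω * s) * V s 0)
          (-(Real.cos (ω * t) * ω) * V t 0 + -Real.sin (ω * t) * (F t 0 + ω * V t 1)) t :=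
        hsin.neg.mul hV0
      have h2 : HasDerivAt (fun s => (1 - Real.cos (ω * s)) * V s 1)
          ((0 - -Real.sin (ω * t) * ω) * V t 1 + (1 - Real.cos (ω * t)) * (F t 1 - ω * V t 0)) t :=
        (((hasDerivAt_const t (1:ℝ)).sub hcos).mul hV1)
      have := hX0.add (((h1.add h2)).const_mul (1 / ω))
      refine this.congr_deriv ?_
      field_simp
      ring
    exact h
  · have h : HasDerivAt
        (fun s => X s 1 + (1 / ω) * ((Real.cos (ω * s) - 1) * V s 0 - Real.sin (ω * s) * V s 1))
        ((1 / ω) * ((Real.cos (ω * t) - 1) * F t 0 - Real.sin (ω * t) * F t 1)) t := by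
      have h1 : HasDerivAt (fun s => (Real.cos (ω * s) - 1) * V s 0)
          ((-Real.sin (ω * t) * ω - 0) * V t 0 + (Real.cos (ω * t) - 1) * (F t 0 + ω * V t 1)) t :=
        ((hcos.sub (hasDerivAt_const t (1:ℝ))).mul hV0)
      have h2 : HasDerivAt (fun s => Real.sin (ω * s) * V s 1)
          ((Real.cos (ω * t) * ω) * V t 1 + Real.sin (ω * t) * (F t 1 - ω * V t 0)) t :=
        hsin.mul hV1
      have := hX1.add (((h1.sub h2)).const_mul (1 / ω))
      refine this.congr_deriv ?_
      field_simp
      ring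
    exact h
end

section
/- Let ω ≠ 0 be a real number, and for t ∈ ℝ let M_ω(t) : ℝ³ → ℝ³ be the linear map M_ω(t)v = ((1/ω)(−sin(ωt) v₁ + (1 − cos(ωt)) v₂), (1/ω)((cos(ωt) − 1) v₁ − sin(ωt) v₂), −t v₃). Let F : ℝ → ℝ³ be continuous and let X, V : ℝ → ℝ³ be C¹ functions satisfying X'(t) = V(t) and V'(t) = F(t) + V(t) × (0,0,ω) for all t, where × is the cross product on ℝ³. Then for all t ∈ ℝ, the function t ↦ X(t) + M_ω(t) V(t) is differentiable with derivative d/dt [X(t) + M_ω(t) V(t)] = M_ω(t) F(t). -/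
open Real

/-- The linear map `M_ω(t) = D_ω(t)/ω` of the backward free magnetized flow in
dimension 3. -/
noncomputable def Mom3 (ω t : ℝ) (v : Fin 3 → ℝ) : Fin 3 → ℝ :=
  ![(1 / ω) * (-Real.sin (ω * t) * v 0 + (1 - Real.cos (ω * t)) * v 1),
    (1 / ω) * ((Real.cos (ω * t) - 1) * v 0 - Real.sin (ω * t) * v 1),
    -t * v 2]

/-- For three-dimensional characteristics `X' = V`, `V' = F + V × (0,0,ω)`, the
composition with the backward free magnetized flow `t ↦ X(t) + M_ω(t) V(t)` is
differentiable with derivative `M_ω(t) F(t)`. -/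
theorem backward_flow_derivative_3d
    (ω : ℝ) (hω : ω ≠ 0) (F X V : ℝ → Fin 3 → ℝ) (hF : Continuous F)
    (hX : ∀ t, HasDerivAt X (V t) t)
    (hV : ∀ t, HasDerivAt V (F t + crossProduct (V t) ![0, 0, ω]) t) :
    ∀ t, HasDerivAt (fun s => X s + Mom3 ω s (V s)) (Mom3 ω t (F t)) t := by
  intro t
  have hX' := hasDerivAt_pi.mp (hX t)
  have hV' := hasDerivAt_pi.mp (hV t)
  have hV0 : HasDerivAt (fun s => V s 0) (F t 0 + V t 1 * ω) t := by
    have := hV' 0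
    refine this.congr_deriv ?_
    simp [cross_apply]
  have hV1 : HasDerivAt (fun s => V s 1) (F t 1 - V t 0 * ω) t := by
    have := hV' 1
    refine this.congr_deriv ?_
    simp [cross_apply]
    ring
  have hV2 : HasDerivAt (fun s => V s 2) (F t 2) t := by
    have := hV' 2
    refine this.congr_deriv ?_
    simp [cross_apply]
  have hsin : HasDerivAt (fun s => Real.sin (ω * s)) (Real.cos (ω * t) * ω) t := by
    simpa using ((hasDerivAt_id t).const_mul ω).sin
  have hcos : HasDerivAt (fun s => Real.cos (ω * s)) (-Real.sin (ω * t) * ω) t := by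
    simpa using ((hasDerivAt_id t).const_mul ω).cos
  rw [hasDerivAt_pi]
  intro i
  fin_cases i
  · have h : HasDerivAt (fun s => X s 0 + (1 / ω) *
        (-Real.sin (ω * s) * V s 0 + (1 - Real.cos (ω * s)) * V s 1))
        (V t 0 + (1 / ω) *
          ((-(Real.cos (ω * t) * ω) * V t 0 + -Real.sin (ω * t) * (F t 0 + V t 1 * ω)) +
           ((0 - -Real.sin (ω * t) * ω) * V t 1 + (1 - Real.cos (ω * t)) * (F t 1 - V t 0 * ω)))) t :=
      (hX' 0).add ((((hsin.neg.mul hV0).add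
        (((hasDerivAt_const t (1:ℝ)).sub hcos).mul hV1))).const_mul (1 / ω))
    exact h.congr_deriv (by simp [Mom3]; field_simp; ring)
  · have h : HasDerivAt (fun s => X s 1 + (1 / ω) *
        ((Real.cos (ω * s) - 1) * V s 0 - Real.sin (ω * s) * V s 1))
        (V t 1 + (1 / ω) *
          (((-Real.sin (ω * t) * ω - 0) * V t 0 + (Real.cos (ω * t) - 1) * (F t 0 + V t 1 * ω)) -
           (Real.cos (ω * t) * ω * V t 1 + Real.sin (ω * t) * (F t 1 - V t 0 * ω)))) t :=
      (hX' 1).add ((((hcos.sub (hasDerivAt_const t (1:ℝ))).mul hV0).sub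
        (hsin.mul hV1)).const_mul (1 / ω))
    exact h.congr_deriv (by simp [Mom3]; field_simp; ring)
  · have h : HasDerivAt (fun s => X s 2 + -s * V s 2)
        (V t 2 + (-1 * V t 2 + -t * F t 2)) t :=
      (hX' 2).add (((hasDerivAt_id t).neg.mul hV2))
    exact h.congr_deriv (by simp [Mom3])
end

section
/- Let T > 0, C > 0, let J : [0,T] → [0,∞) be integrable, and let Q : [0,T] → ℝ be differentiable with 0 < Q(t) < 1/e for all t ∈ [0,T] and Q'(t) ≤ C J(t) Q(t) √(|log Q(t)|) for all t ∈ [0,T]. If moreover √(−log Q(0)) ≥ (C/2) ∫₀ᵀ J(s) ds, then for all t ∈ [0,T], Q(t) ≤ exp( −( √(−log Q(0)) − (C/2) ∫₀ᵗ J(s) ds )² ). -/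
open Real MeasureTheory intervalIntegral

/-- Grönwall lemma with square-root-of-log nonlinearity for the improved (kinetic
Wasserstein) stability estimate: if `0 < Q(t) < 1/e`,
`Q'(t) ≤ C J(t) Q(t) √|log Q(t)|` on `[0,T]` and
`√(-log Q(0)) ≥ (C/2) ∫₀ᵀ J`, then
`Q(t) ≤ exp(-(√(-log Q(0)) - (C/2) ∫₀ᵗ J)²)`. -/
theorem gronwall_sqrt_log
    (T C : ℝ) (hT : 0 < T) (hC : 0 < C)
    (J : ℝ → ℝ) (hJ_int : IntegrableOn J (Set.Icc 0 T))
    (hJ_nonneg : ∀ s ∈ Set.Icc (0 : ℝ) T, 0 ≤ J s)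
    (Q : ℝ → ℝ)
    (hQ_pos : ∀ t ∈ Set.Icc (0 : ℝ) T, 0 < Q t)
    (hQ_lt : ∀ t ∈ Set.Icc (0 : ℝ) T, Q t < Real.exp (-1))
    (hQ_diff : ∀ t ∈ Set.Icc (0 : ℝ) T, DifferentiableAt ℝ Q t)
    (hQ' : ∀ t ∈ Set.Icc (0 : ℝ) T,
      deriv Q t ≤ C * J t * Q t * Real.sqrt |Real.log (Q t)|)
    (h0 : Real.sqrt (-Real.log (Q 0)) ≥ (C / 2) * ∫ s in (0 : ℝ)..T, J s) :
    ∀ t ∈ Set.Icc (0 : ℝ) T,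
      Q t ≤ Real.exp
        (-(Real.sqrt (-Real.log (Q 0)) - (C / 2) * ∫ s in (0 : ℝ)..t, J s) ^ 2) := by
  intro t ht
  obtain ⟨ht0, htT⟩ := ht
  -- basic facts
  have hlog : ∀ x ∈ Set.Icc (0 : ℝ) T, 1 < -Real.log (Q x) := by
    intro x hx
    have h1 : Real.log (Q x) < -1 := by
      have := Real.log_lt_log (hQ_pos x hx) (hQ_lt x hx)
      simpa [Real.log_exp] using this
    linarith
  have hQmem : ∀ x ∈ Set.Icc (0 : ℝ) T, 0 < Q x := hQ_pos
  set g : ℝ → ℝ := fun x => -Real.sqrt (-Real.log (Q x)) with hg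
  set g' : ℝ → ℝ := fun x =>
    deriv Q x / Q x / (2 * Real.sqrt (-Real.log (Q x))) with hg'
  have hderiv : ∀ x ∈ Set.Icc (0 : ℝ) T, HasDerivAt g (g' x) x := by
    intro x hx
    have hQx := hQ_pos x hx
    have hlx := hlog x hx
    have h1 : HasDerivAt (fun u => -Real.log (Q u)) (-(deriv Q x / Q x)) x :=
      (((hQ_diff x hx).hasDerivAt).log hQx.ne').neg
    have h2 : HasDerivAt Real.sqrt (1 / (2 * Real.sqrt (-Real.log (Q x))))
        (-Real.log (Q x)) := Real.hasDerivAt_sqrt (by linarith)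
    have h3 := h2.comp x h1
    have h4 := h3.neg
    have heq : g' x = -(1 / (2 * Real.sqrt (-Real.log (Q x))) * -(deriv Q x / Q x)) := by
      rw [hg']; ring
    rw [heq]; exact h4
  have hcontg : ContinuousOn g (Set.Icc 0 T) := fun x hx =>
    ((hderiv x hx).continuousAt).continuousWithinAt
  have hsub : Set.Icc (0:ℝ) t ⊆ Set.Icc 0 T := Set.Icc_subset_Icc le_rfl htT
  have hJt_int : IntegrableOn (fun s => C / 2 * J s) (Set.Icc 0 t) :=
    ((hJ_int.mono_set hsub).const_mul _)
  have hbound : ∀ x ∈ Set.Ioo (0:ℝ) t, g' x ≤ C / 2 * J x := by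
    intro x hx
    have hx' : x ∈ Set.Icc (0:ℝ) T := hsub (Set.Ioo_subset_Icc_self hx)
    have hQx := hQ_pos x hx'
    have hlx := hlog x hx'
    have hs : 0 < Real.sqrt (-Real.log (Q x)) := Real.sqrt_pos.2 (by linarith)
    have habs : |Real.log (Q x)| = -Real.log (Q x) := abs_of_neg (by linarith)
    have hQ'x := hQ' x hx'
    rw [habs] at hQ'x
    have hden : 0 < Q x * (2 * Real.sqrt (-Real.log (Q x))) := by positivity
    have : deriv Q x / (Q x * (2 * Real.sqrt (-Real.log (Q x)))) ≤
        (C * J x * Q x * Real.sqrt (-Real.log (Q x))) /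
          (Q x * (2 * Real.sqrt (-Real.log (Q x)))) :=
      div_le_div_of_nonneg_right hQ'x hden.le
    calc g' x = deriv Q x / (Q x * (2 * Real.sqrt (-Real.log (Q x)))) := by
          rw [hg']; ring
      _ ≤ (C * J x * Q x * Real.sqrt (-Real.log (Q x))) /
          (Q x * (2 * Real.sqrt (-Real.log (Q x)))) := this
      _ = C / 2 * J x := by field_simp
  have key : g t - g 0 ≤ ∫ s in (0:ℝ)..t, C / 2 * J s := by
    apply sub_le_integral_of_hasDeriv_right_of_le ht0 (hcontg.mono hsub)
      (fun x hx => ((hderiv x (hsub (Set.Ioo_subset_Icc_self hx))).hasDerivWithinAt))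
      hJt_int hbound
  rw [intervalIntegral.integral_const_mul] at key
  -- the integral up to t is at most the integral up to T
  have hint0t : IntervalIntegrable J volume 0 t :=
    (hJ_int.mono_set (by rw [Set.uIcc_of_le ht0]; exact hsub)).intervalIntegrable
  have hinttT : IntervalIntegrable J volume t T :=
    (hJ_int.mono_set (by rw [Set.uIcc_of_le htT]; exact Set.Icc_subset_Icc ht0 le_rfl)).intervalIntegrable
  have hmono : (∫ s in (0:ℝ)..t, J s) ≤ ∫ s in (0:ℝ)..T, J s := by
    have hsplit : (∫ s in (0:ℝ)..t, J s) + ∫ s in t..T, J s = ∫ s in (0:ℝ)..T, J s :=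
      intervalIntegral.integral_add_adjacent_intervals hint0t hinttT
    have hpos : 0 ≤ ∫ s in t..T, J s := by
      apply intervalIntegral.integral_nonneg htT
      intro u hu
      exact hJ_nonneg u ⟨le_trans ht0 hu.1, hu.2⟩
    linarith
  -- put things together
  set A : ℝ := Real.sqrt (-Real.log (Q 0)) - C / 2 * ∫ s in (0:ℝ)..t, J s with hA
  have hA_nonneg : 0 ≤ A := by
    have : C / 2 * (∫ s in (0:ℝ)..t, J s) ≤ C / 2 * ∫ s in (0:ℝ)..T, J s := by
      apply mul_le_mul_of_nonneg_left hmono (by positivity)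
    rw [hA]; linarith [h0]
  have hA_le : A ≤ Real.sqrt (-Real.log (Q t)) := by
    have : -Real.sqrt (-Real.log (Q t)) + Real.sqrt (-Real.log (Q 0)) ≤
        C / 2 * ∫ s in (0:ℝ)..t, J s := by
      simpa [hg, sub_eq_add_neg] using key
    rw [hA]; linarith
  have hsq : A ^ 2 ≤ -Real.log (Q t) := by
    have h1 : A ^ 2 ≤ Real.sqrt (-Real.log (Q t)) ^ 2 :=
      pow_le_pow_left₀ hA_nonneg hA_le 2
    have h2 : Real.sqrt (-Real.log (Q t)) ^ 2 = -Real.log (Q t) :=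
      Real.sq_sqrt (by linarith [hlog t ⟨ht0, htT⟩])
    linarith
  have : Real.log (Q t) ≤ -A ^ 2 := by linarith
  calc Q t = Real.exp (Real.log (Q t)) := (Real.exp_log (hQ_pos t ⟨ht0, htT⟩)).symm
    _ ≤ Real.exp (-A ^ 2) := Real.exp_le_exp.2 this
end
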